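/- Let W₁,...,W_m be mutually unbiased weighing matrices of order n and weight k over the integers, let p be a prime dividing √k, and reduce modulo p. Then over F_q (q = p^r), W_iW_jᵀ ≡ 0 for all i,j, and consequently for any nonzero X, Y in the matrix algebra generated by the reductions of the W_i and any nonzero α_x, α_y ∈ F_q, [X | α_x I_n]·[Y | α_y I_n]ᵀ = α_x α_y I_n is nonsingular; the set of row spaces of such matrices is an LCD subspace code in F_q^{2n}. -/

import Mathlib

open Matrix

/-- The Euclidean dual of a linear code `C ⊆ F^ι`:
all vectors orthogonal (w.r.t. the standard bilinear form) to every codeword. -/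
def dualCode (F : Type*) [Field F] {ι : Type*} [Fintype ι]
    (C : Submodule F (ι → F)) : Submodule F (ι → F) where
  carrier := {v | ∀ c ∈ C, v ⬝ᵥ c = 0}
  add_mem' := by
    intro a b ha hb c hc
    simp [add_dotProduct, ha c hc, hb c hc]
  zero_mem' := by intro c hc; simp
  smul_mem' := by
    intro r a ha c hc
    simp [smul_dotProduct, ha c hc]

/-- The row space of a matrix: the span of its rows. -/
def rowSpace (F : Type*) [Field F] {κ ι : Type*} (G : Matrix κ ι F) :
    Submodule F (ι → F) := Submodule.span F (Set.range fun k => G k)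

lemma rowSpace_eq (F : Type*) [Field F] {κ ι : Type*} [Fintype κ] (G : Matrix κ ι F) :
    rowSpace F G = LinearMap.range G.vecMulLinear := by
  rw [range_vecMulLinear]; rfl

/-- Mutually unbiased weighing matrices of order `n`, weight `k`,
`p ∣ √k`, reduced mod `p`: `W_i W_jᵀ ≡ 0`, `[X|αx I][Y|αy I]ᵀ = αx αy I` is
nonsingular, and the row spaces form an LCD subspace code in `F_q^{2n}`. -/
theorem stmt13 (F : Type*) [Field F] [Fintype F] {p : ℕ} (hp : p.Prime)
    [CharP F p] {n k s m : ℕ} (hs : s * s = k) (hps : p ∣ s)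
    (W : Fin m → Matrix (Fin n) (Fin n) ℤ)
    (hent : ∀ i a b, W i a b = -1 ∨ W i a b = 0 ∨ W i a b = 1)
    (hW : ∀ i, W i * (W i)ᵀ = (k : ℤ) • 1)
    (hunb : ∀ i j, i ≠ j → ∃ W' : Matrix (Fin n) (Fin n) ℤ,
      (∀ a b, W' a b = -1 ∨ W' a b = 0 ∨ W' a b = 1) ∧
        W' * W'ᵀ = (k : ℤ) • 1 ∧ W i * (W j)ᵀ = (s : ℤ) • W') :
    (∀ i j, (W i).map (Int.cast : ℤ → F) * ((W j).map (Int.cast : ℤ → F))ᵀ = 0) ∧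
      ∀ X Y : Matrix (Fin n) (Fin n) F,
        X ∈ NonUnitalAlgebra.adjoin F
          (Set.range fun i => (W i).map (Int.cast : ℤ → F)) → X ≠ 0 →
        Y ∈ NonUnitalAlgebra.adjoin F
          (Set.range fun i => (W i).map (Int.cast : ℤ → F)) → Y ≠ 0 →
        ∀ αx αy : F, αx ≠ 0 → αy ≠ 0 →
          fromCols X (αx • (1 : Matrix (Fin n) (Fin n) F)) * (fromCols Y (αy • (1 : Matrix (Fin n) (Fin n) F)))ᵀ = (αx * αy) • 1 ∧
            IsUnit (fromCols X (αx • (1 : Matrix (Fin n) (Fin n) F)) * (fromCols Y (αy • (1 : Matrix (Fin n) (Fin n) F)))ᵀ) ∧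
            rowSpace F (fromCols X (αx • (1 : Matrix (Fin n) (Fin n) F))) ⊓
              dualCode F (rowSpace F (fromCols Y (αy • (1 : Matrix (Fin n) (Fin n) F)))) = ⊥ := by
  have hks : ((k : ℤ) : F) = 0 := by
    refine (CharP.intCast_eq_zero_iff F p _).mpr ?_
    obtain ⟨t, ht⟩ := hps
    exact ⟨(t * s : ℕ), by push_cast [← hs, ht]; ring⟩
  have hss : ((s : ℤ) : F) = 0 :=
    (CharP.intCast_eq_zero_iff F p _).mpr (by exact_mod_cast hps)
  have hzero : ∀ i j, (W i).map (Int.cast : ℤ → F) * ((W j).map (Int.cast : ℤ → F))ᵀ = 0 := by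
    intro i j
    ext a b
    have e : ((W i).map (Int.cast : ℤ → F) * ((W j).map (Int.cast : ℤ → F))ᵀ) a b
        = (((W i * (W j)ᵀ) a b : ℤ) : F) := by
      simp only [Matrix.mul_apply, Matrix.map_apply, Matrix.transpose_apply]
      push_cast
      rfl
    rcases eq_or_ne i j with rfl | hij
    · rw [e, hW i]
      simp only [Matrix.smul_apply, smul_eq_mul, Int.cast_mul, hks, zero_mul,
        Matrix.zero_apply]
    · obtain ⟨W', _, _, hWij⟩ := hunb i j hij
      rw [e, hWij]
      simp only [Matrix.smul_apply, smul_eq_mul, Int.cast_mul, hss, zero_mul,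
        Matrix.zero_apply]
  refine ⟨hzero, fun X Y hX hX0 hY hY0 αx αy hαx hαy => ?_⟩
  have key : X * Yᵀ = 0 := by
    clear hX0 hY0
    induction hX, hY using NonUnitalAlgebra.adjoin_induction₂ with
    | mem_mem x y hx hy =>
      obtain ⟨i, rfl⟩ := hx; obtain ⟨j, rfl⟩ := hy; exact hzero i j
    | zero_left x hx => simp
    | zero_right x hx => simp
    | add_left x y z hx hy hz h1 h2 => rw [add_mul, h1, h2, add_zero]
    | add_right x y z hx hy hz h1 h2 => rw [transpose_add, mul_add, h1, h2, add_zero]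
    | mul_left x y z hx hy hz h1 h2 => rw [mul_assoc, h2, mul_zero]
    | mul_right x y z hx hy hz h1 h2 => rw [transpose_mul, ← mul_assoc, h2, zero_mul]
    | smul_left r x y hx hy h => rw [smul_mul_assoc, h, smul_zero]
    | smul_right r x y hx hy h => rw [transpose_smul, mul_smul_comm, h, smul_zero]
  have hαxy : (αx * αy : F) ≠ 0 := mul_ne_zero hαx hαy
  have hprod : fromCols X (αx • (1 : Matrix (Fin n) (Fin n) F)) *
      (fromCols Y (αy • (1 : Matrix (Fin n) (Fin n) F)))ᵀ = (αx * αy) • 1 := by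
    rw [transpose_fromCols, fromCols_mul_fromRows, key, transpose_smul, transpose_one]
    simp [Matrix.smul_mul, Matrix.mul_smul, smul_smul, mul_comm]
  have hunit : IsUnit (fromCols X (αx • (1 : Matrix (Fin n) (Fin n) F)) *
      (fromCols Y (αy • (1 : Matrix (Fin n) (Fin n) F)))ᵀ) := by
    rw [hprod]
    refine ⟨⟨(αx * αy) • 1, (αx * αy)⁻¹ • (1 : Matrix (Fin n) (Fin n) F), ?_, ?_⟩, rfl⟩ <;>
      rw [Matrix.smul_mul, Matrix.mul_smul, smul_smul, one_mul] <;>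
      first
      | rw [mul_inv_cancel₀ hαxy, one_smul]
      | rw [inv_mul_cancel₀ hαxy, one_smul]
  refine ⟨hprod, hunit, ?_⟩
  rw [eq_bot_iff]
  rintro v ⟨hv1, hv2⟩
  set G1 := fromCols X (αx • (1 : Matrix (Fin n) (Fin n) F)) with hG1
  set G2 := fromCols Y (αy • (1 : Matrix (Fin n) (Fin n) F)) with hG2
  rw [SetLike.mem_coe, rowSpace_eq] at hv1
  obtain ⟨w, rfl⟩ := hv1
  have hG2v : ∀ j, (w ᵥ* G1) ⬝ᵥ G2 j = 0 := fun j =>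
    hv2 (G2 j) (Submodule.subset_span ⟨j, rfl⟩)
  have hw0 : w ᵥ* (G1 * G2ᵀ) = 0 := by
    funext j
    rw [← Matrix.vecMul_vecMul, Matrix.vecMul_transpose]
    have h := hG2v j
    rw [dotProduct_comm] at h
    simpa [Matrix.mulVec] using h
  rw [hprod] at hw0
  have hwz : w = 0 := by
    have h2 : w ᵥ* (((αx * αy) • (1 : Matrix (Fin n) (Fin n) F)) *
        ((αx * αy)⁻¹ • 1)) = 0 := by
      rw [← Matrix.vecMul_vecMul, hw0, Matrix.zero_vecMul]
    rwa [show ((αx * αy) • (1 : Matrix (Fin n) (Fin n) F)) * ((αx * αy)⁻¹ • 1) = 1 by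
        rw [Matrix.smul_mul, Matrix.mul_smul, smul_smul, one_mul, mul_inv_cancel₀ hαxy,
          one_smul],
      Matrix.vecMul_one] at h2
  simp [hwz, Submodule.mem_bot, Matrix.vecMulLinear_apply]
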